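/- Let G be an abelian group with a subgroup K such that: End(G/K) ≅ ℤ, K is fully invariant in G, and Hom(K, G/K) = 0 = Hom(G, K). Then the quotient map c : G → G/K is a cellular cover, i.e., composition with c induces a bijection Hom(G,G) → Hom(G, G/K). -/

import Mathlib

/-- Let `G` be abelian and `K ≤ G` with `End(G/K) ≅ ℤ`, `K` fully invariant in `G`
and `Hom(K, G/K) = 0 = Hom(G, K)`.  Then the quotient map `c : G → G/K` is a
cellular cover: composition with `c` gives a bijection `Hom(G,G) → Hom(G, G/K)`. -/
theorem quotient_is_cellular_cover
    {G : Type*} [AddCommGroup G] (K : AddSubgroup G)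
    (hEndM : ∀ φ : G ⧸ K →+ G ⧸ K, ∃ n : ℤ, ∀ x, φ x = n • x)
    (hfi : ∀ μ : G →+ G, ∀ x ∈ K, μ x ∈ K)
    (hKM : ∀ f : K →+ G ⧸ K, f = 0)
    (hGK : ∀ f : G →+ K, f = 0) :
    Function.Bijective fun ψ : G →+ G => (QuotientAddGroup.mk' K).comp ψ := by
  constructor
  · intro ψ₁ ψ₂ h
    simp only at h
    have hmem : ∀ x : G, (ψ₁ - ψ₂) x ∈ K := by
      intro x
      have := congrArg (fun f : G →+ G ⧸ K => f x) h
      simp only [AddMonoidHom.comp_apply, QuotientAddGroup.mk'_apply] at this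
      have : ψ₁ x - ψ₂ x ∈ K := (QuotientAddGroup.eq_iff_sub_mem).mp this
      simpa using this
    have hf := hGK (AddMonoidHom.codRestrict (ψ₁ - ψ₂) K hmem)
    ext x
    have := congrArg (fun f : G →+ K => (f x : G)) hf
    simp only [AddMonoidHom.codRestrict_apply, AddMonoidHom.sub_apply,
      AddMonoidHom.zero_apply, ZeroMemClass.coe_zero] at this
    exact sub_eq_zero.mp this
  · intro φ
    have hK : ∀ x ∈ K, φ x = 0 := by
      intro x hx
      have := congrArg (fun f : K →+ G ⧸ K => f ⟨x, hx⟩) (hKM (φ.comp K.subtype))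
      simpa using this
    obtain ⟨n, hn⟩ := hEndM (QuotientAddGroup.lift K φ hK)
    refine ⟨n • AddMonoidHom.id G, ?_⟩
    ext x
    have := hn ((x : G) : G ⧸ K)
    change φ x = n • ((x : G) : G ⧸ K) at this
    simp [← this]
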